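/- arXiv:1109.5478 — 2 statements merged into one kernel-verified Lean document; each statement's English description precedes it below -/
import Mathlib

section
/- For every triple S₁, S₂, S₃ of selfadjoint matrices in Matrix (Fin 3) (Fin 3) ℂ, there exist unit vectors x, y ∈ ℝ³, with y ≠ x and y ≠ −x, such that, regarding x and y as vectors in ℂ³ with real entries, ⟨x, S_j x⟩ = ⟨y, S_j y⟩ for j = 1, 2, 3. In other words, no collection of 3 selfadjoint operators is informationally complete with respect to the set of pure states on ℂ³ with real amplitudes (i.e., pure states arising from unit vectors in ℂ³ all of whose coordinates are real). -/
open Matrix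
open scoped ComplexOrder

/-- A POVM with `n` outcomes on `ℂ^d`: a family of positive semidefinite matrices summing to the
identity. -/
def IsPOVM {d n : ℕ} (A : Fin n → Matrix (Fin d) (Fin d) ℂ) : Prop :=
  (∀ j, (A j).PosSemidef) ∧ ∑ j, A j = 1

/-- A state on `ℂ^d`: a positive semidefinite matrix with trace 1. -/
def IsState {d : ℕ} (ρ : Matrix (Fin d) (Fin d) ℂ) : Prop :=
  ρ.PosSemidef ∧ ρ.trace = 1

/-- A family of matrices (e.g. a POVM or a collection of selfadjoint operators) is
informationally complete w.r.t. a set `P` of states if the expectation values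
`trace (ρ * A j)` separate the points of `P`. -/
def IsIC {d n : ℕ} (A : Fin n → Matrix (Fin d) (Fin d) ℂ)
    (P : Set (Matrix (Fin d) (Fin d) ℂ)) : Prop :=
  ∀ ρ₁ ∈ P, ∀ ρ₂ ∈ P, (∀ j, (ρ₁ * A j).trace = (ρ₂ * A j).trace) → ρ₁ = ρ₂

/-- The set of pure states on `ℂ^d`: states of rank 1. -/
def PureStates (d : ℕ) : Set (Matrix (Fin d) (Fin d) ℂ) :=
  {ρ | IsState ρ ∧ ρ.rank = 1}


open ComplexConjugate

lemma aux_pick (d : Fin 3 → ℝ) (hsum : d 0 + d 1 + d 2 = 0) (hprod : d 0 * d 1 * d 2 = 0)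
    (hne : d ≠ 0) :
    ∃ i₀ i₁ i₂ : Fin 3, i₀ ≠ i₁ ∧ i₀ ≠ i₂ ∧ i₁ ≠ i₂ ∧
      (∀ f : Fin 3 → ℝ, ∑ i, f i = f i₀ + f i₁ + f i₂) ∧
      d i₀ = 0 ∧ d i₂ = -d i₁ ∧ d i₁ ≠ 0 := by
  have hnz : ¬ (d 0 = 0 ∧ d 1 = 0 ∧ d 2 = 0) := by
    rintro ⟨h0, h1, h2⟩
    apply hne
    funext i
    fin_cases i <;> simp [h0, h1, h2]
  have h3 : d 0 = 0 ∨ d 1 = 0 ∨ d 2 = 0 := by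
    rcases mul_eq_zero.mp hprod with h | h
    · rcases mul_eq_zero.mp h with h | h
      · exact Or.inl h
      · exact Or.inr (Or.inl h)
    · exact Or.inr (Or.inr h)
  rcases h3 with h | h | h
  · exact ⟨0, 1, 2, by decide, by decide, by decide,
      fun f => by rw [Fin.sum_univ_three], h, by linarith, fun hc => hnz ⟨h, hc, by linarith⟩⟩
  · exact ⟨1, 0, 2, by decide, by decide, by decide,
      fun f => by rw [Fin.sum_univ_three]; ring, h, by linarith, fun hc => hnz ⟨hc, h, by linarith⟩⟩
  · exact ⟨2, 0, 1, by decide, by decide, by decide,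
      fun f => by rw [Fin.sum_univ_three]; ring, h, by linarith, fun hc => hnz ⟨hc, by linarith, h⟩⟩

lemma aux_decomp (B : Matrix (Fin 3) (Fin 3) ℝ) (hB : B.IsHermitian) (htr : B.trace = 0)
    (hdet : B.det = 0) (hB0 : B ≠ 0) :
    ∃ (lam : ℝ) (x y : EuclideanSpace ℝ (Fin 3)), lam ≠ 0 ∧ ‖x‖ = 1 ∧ ‖y‖ = 1 ∧
      inner ℝ x y = (0 : ℝ) ∧ ∀ k l, B k l = lam * (x k * x l - y k * y l) := by
  set d := hB.eigenvalues with hd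
  have hsum : d 0 + d 1 + d 2 = 0 := by
    have h := hB.spectral_theorem
    have : B.trace = ∑ i, d i := by
      conv_lhs => rw [h]
      rw [Unitary.conjStarAlgAut_apply, Matrix.trace_mul_cycle, Unitary.coe_star_mul_self, one_mul]
      simp [Matrix.trace_diagonal, hd]
    rw [htr] at this
    rw [Fin.sum_univ_three] at this
    linarith
  have hprod : d 0 * d 1 * d 2 = 0 := by
    have := hB.det_eq_prod_eigenvalues
    rw [hdet] at this
    rw [Fin.prod_univ_three] at this
    exact this.symm
  have hdne : d ≠ 0 := by
    intro h0
    apply hB0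
    have h := hB.spectral_theorem
    rw [h]
    have : Matrix.diagonal (RCLike.ofReal ∘ d) = (0 : Matrix (Fin 3) (Fin 3) ℝ) := by
      rw [h0]; ext i j; simp [Matrix.diagonal_apply]
    rw [this]
    simp
  obtain ⟨i₀, i₁, i₂, h01, h02, h12, hsum3, hd0, hd2, hd1⟩ := aux_pick d hsum hprod hdne
  refine ⟨d i₁, hB.eigenvectorBasis i₁, hB.eigenvectorBasis i₂, hd1,
    hB.eigenvectorBasis.orthonormal.1 i₁, hB.eigenvectorBasis.orthonormal.1 i₂,
    hB.eigenvectorBasis.orthonormal.2 h12, ?_⟩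
  intro k l
  have hentry : B k l = ∑ i, d i * (hB.eigenvectorBasis i k * hB.eigenvectorBasis i l) := by
    conv_lhs => rw [hB.spectral_theorem]
    simp [Matrix.mul_apply, Matrix.diagonal_apply, Finset.sum_mul]
    apply Finset.sum_congr rfl
    intro i _
    ring
  rw [hentry, hsum3, hd0, hd2]
  ring


noncomputable def auxC (A : Fin 3 → Matrix (Fin 3) (Fin 3) ℝ) : Fin 7 → Matrix (Fin 3) (Fin 3) ℝ :=
  ![A 0, A 1, A 2, 1,
    Matrix.of ![![0,1,0],![-1,0,0],![0,0,0]],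
    Matrix.of ![![0,0,1],![0,0,0],![-1,0,0]],
    Matrix.of ![![0,0,0],![0,0,1],![0,-1,0]]]

noncomputable def auxL (A : Fin 3 → Matrix (Fin 3) (Fin 3) ℝ) :
    Matrix (Fin 3) (Fin 3) ℝ →ₗ[ℝ] (Fin 7 → ℝ) where
  toFun B := fun j => ∑ k, ∑ l, auxC A j k l * B k l
  map_add' B C := by
    funext j
    simp [Finset.sum_add_distrib, mul_add]
  map_smul' c B := by
    funext j
    simp [Finset.mul_sum, mul_left_comm]

lemma aux_ker2 (A : Fin 3 → Matrix (Fin 3) (Fin 3) ℝ) :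
    2 ≤ Module.finrank ℝ (LinearMap.ker (auxL A)) := by
  have h := (auxL A).finrank_range_add_finrank_ker
  have h9 : Module.finrank ℝ (Matrix (Fin 3) (Fin 3) ℝ) = 9 := by
    simp [Module.finrank_matrix]
  have h7 : Module.finrank ℝ (LinearMap.range (auxL A)) ≤ 7 := by
    have := Submodule.finrank_le (LinearMap.range (auxL A))
    simpa using this
  omega

set_option maxHeartbeats 1000000 in
lemma aux_exists_B (A : Fin 3 → Matrix (Fin 3) (Fin 3) ℝ) :
    ∃ B : Matrix (Fin 3) (Fin 3) ℝ, B ≠ 0 ∧ B.IsHermitian ∧ B.trace = 0 ∧ B.det = 0 ∧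
      ∀ j : Fin 3, ∑ k, ∑ l, A j k l * B k l = 0 := by
  have h2 := aux_ker2 A
  set K := LinearMap.ker (auxL A) with hK
  have : Module.Finite ℝ K := Module.Finite.of_injective K.subtype Subtype.coe_injective
  let b := Module.finBasis ℝ K
  let i0 : Fin (Module.finrank ℝ K) := ⟨0, by omega⟩
  let i1 : Fin (Module.finrank ℝ K) := ⟨1, by omega⟩
  have hi01 : i0 ≠ i1 := by
    simp [i0, i1, Fin.mk.injEq]
  let v₀ := b i0
  let v₁ := b i1
  -- IVT to find θ with det = 0
  set f : ℝ → ℝ := fun θ =>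
    (Real.cos θ • (v₀ : Matrix (Fin 3) (Fin 3) ℝ) + Real.sin θ • (v₁ : Matrix (Fin 3) (Fin 3) ℝ)).det
    with hf
  have hcont : Continuous f := by
    simp only [hf, Matrix.det_fin_three, Matrix.add_apply, Matrix.smul_apply, smul_eq_mul]
    fun_prop
  have hfpi : f Real.pi = - f 0 := by
    simp only [hf, Real.cos_pi, Real.sin_pi, Real.cos_zero, Real.sin_zero]
    rw [show ((-1 : ℝ) • (v₀ : Matrix (Fin 3) (Fin 3) ℝ) + (0:ℝ) • (v₁ : Matrix (Fin 3) (Fin 3) ℝ))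
        = -((1:ℝ) • (v₀ : Matrix (Fin 3) (Fin 3) ℝ) + (0:ℝ) • (v₁ : Matrix (Fin 3) (Fin 3) ℝ)) by
      simp]
    rw [Matrix.det_neg]
    norm_num
  have hθ : ∃ θ ∈ Set.Icc 0 Real.pi, f θ = 0 := by
    rcases le_total (f 0) 0 with h0 | h0
    · have : (0:ℝ) ∈ Set.Icc (f 0) (f Real.pi) := ⟨h0, by rw [hfpi]; linarith⟩
      obtain ⟨θ, hθm, hθv⟩ := intermediate_value_Icc Real.pi_nonneg hcont.continuousOn this
      exact ⟨θ, hθm, hθv⟩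
    · have : (0:ℝ) ∈ Set.Icc (f Real.pi) (f 0) := ⟨by rw [hfpi]; linarith, h0⟩
      obtain ⟨θ, hθm, hθv⟩ := intermediate_value_Icc' Real.pi_nonneg hcont.continuousOn this
      exact ⟨θ, hθm, hθv⟩
  obtain ⟨θ, _, hθv⟩ := hθ
  set w : K := Real.cos θ • b i0 + Real.sin θ • b i1 with hw
  set B : Matrix (Fin 3) (Fin 3) ℝ := (w : Matrix (Fin 3) (Fin 3) ℝ) with hBdef
  have hBco : B = Real.cos θ • (v₀ : Matrix (Fin 3) (Fin 3) ℝ)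
      + Real.sin θ • (v₁ : Matrix (Fin 3) (Fin 3) ℝ) := by
    simp [hBdef, hw, v₀, v₁]
  have hB0 : B ≠ 0 := by
    intro hB
    have hw0 : w = 0 := by
      apply Subtype.coe_injective
      simpa [hBdef] using hB
    have hr := congrArg b.repr hw0
    rw [hw] at hr
    rw [map_add, _root_.map_smul, _root_.map_smul, b.repr_self, b.repr_self, map_zero] at hr
    have hc := DFunLike.congr_fun hr i0
    have hs := DFunLike.congr_fun hr i1
    simp [Finsupp.single_apply, hi01, hi01.symm] at hc hs
    have := Real.sin_sq_add_cos_sq θ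
    rw [hc, hs] at this
    norm_num at this
  have hmem : B ∈ K := w.2
  clear_value w
  clear_value B
  have key : ∀ j, ∑ k, ∑ l, auxC A j k l * B k l = 0 := by
    intro j
    have := congrFun (LinearMap.mem_ker.mp hmem) j
    simpa [auxL] using this
  have hfrob : ∀ j : Fin 3, ∑ k, ∑ l, A j k l * B k l = 0 := by
    intro j
    fin_cases j
    · have := key 0; rw [show auxC A 0 = A 0 from rfl] at this; exact this
    · have := key 1; rw [show auxC A 1 = A 1 from rfl] at this; exact this
    · have := key 2; rw [show auxC A 2 = A 2 from rfl] at this; exact this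
  have htr : B.trace = 0 := by
    have h3 := key 3
    rw [show auxC A 3 = 1 from rfl] at h3
    simp [Fin.sum_univ_three, Matrix.one_apply] at h3
    simp [Matrix.trace, Matrix.diag, Fin.sum_univ_three]
    linarith
  have hherm : B.IsHermitian := by
    have h4 := key 4
    have h5 := key 5
    have h6 := key 6
    rw [show auxC A 4 = Matrix.of ![![0,1,0],![-1,0,0],![0,0,0]] from rfl] at h4
    rw [show auxC A 5 = Matrix.of ![![0,0,1],![0,0,0],![-1,0,0]] from rfl] at h5
    rw [show auxC A 6 = Matrix.of ![![0,0,0],![0,0,1],![0,-1,0]] from rfl] at h6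
    simp [Fin.sum_univ_three, Matrix.vecHead, Matrix.vecTail] at h4 h5 h6
    show Bᴴ = B
    ext k l
    rw [Matrix.conjTranspose_apply]
    rw [star_trivial]
    fin_cases k <;> fin_cases l <;> simp <;> linarith
  have hdet : B.det = 0 := by
    rw [hBco]; exact hθv
  exact ⟨B, hB0, hherm, htr, hdet, hfrob⟩

noncomputable def auxA (S : Fin 3 → Matrix (Fin 3) (Fin 3) ℂ) : Fin 3 → Matrix (Fin 3) (Fin 3) ℝ :=
  fun j => Matrix.of fun k l => (S j k l).re

lemma aux_E_zero (S : Matrix (Fin 3) (Fin 3) ℂ) (hS : S.IsHermitian)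
    (B : Matrix (Fin 3) (Fin 3) ℝ) (hherm : B.IsHermitian)
    (hfrob : ∑ k, ∑ l, (S k l).re * B k l = 0) :
    ∑ k, ∑ l, S k l * ((B k l : ℝ) : ℂ) = 0 := by
  have hBsym : ∀ k l, B l k = B k l := by
    intro k l; simpa using hherm.apply k l
  have hIm : ∀ k l, (S l k).im = -(S k l).im := by
    intro k l
    have := hS.apply k l
    rw [← this]; simp
  have hT : ∑ k, ∑ l, (S k l).im * B k l = 0 := by
    have hswap : ∑ k, ∑ l, (S k l).im * B k l = ∑ k, ∑ l, (S l k).im * B l k :=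
      Finset.sum_comm
    have h2 : ∑ k, ∑ l, (S l k).im * B l k = -∑ k, ∑ l, (S k l).im * B k l := by
      rw [← Finset.sum_neg_distrib]
      refine Finset.sum_congr rfl fun k _ => ?_
      rw [← Finset.sum_neg_distrib]
      refine Finset.sum_congr rfl fun l _ => ?_
      rw [hIm, hBsym]; ring
    rw [h2] at hswap; linarith
  apply Complex.ext
  · rw [Complex.re_sum]
    simp only [Complex.re_sum, Complex.mul_re, Complex.ofReal_re, Complex.ofReal_im]
    simpa using hfrob
  · rw [Complex.im_sum]
    simp only [Complex.im_sum, Complex.mul_im, Complex.ofReal_re, Complex.ofReal_im]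
    simpa using hT

lemma aux_main (S : Fin 3 → Matrix (Fin 3) (Fin 3) ℂ)
    (hS : ∀ j, (S j).IsHermitian) :
    ∃ x y : EuclideanSpace ℝ (Fin 3), ‖x‖ = 1 ∧ ‖y‖ = 1 ∧ y ≠ x ∧ y ≠ -x ∧
      ∀ j, ∑ k, ∑ l, (starRingEnd ℂ) ((x k : ℂ)) * S j k l * ((x l : ℂ)) =
           ∑ k, ∑ l, (starRingEnd ℂ) ((y k : ℂ)) * S j k l * ((y l : ℂ)) := by
  obtain ⟨B, hB0, hherm, htr, hdet, hfrob⟩ := aux_exists_B (auxA S)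
  obtain ⟨lam, x, y, hlam, hx1, hy1, hxy, hdec⟩ := aux_decomp B hherm htr hdet hB0
  refine ⟨x, y, hx1, hy1, ?_, ?_, ?_⟩
  · intro h
    rw [h] at hxy
    rw [real_inner_self_eq_norm_mul_norm, hx1] at hxy
    norm_num at hxy
  · intro h
    rw [h] at hxy
    rw [inner_neg_right, real_inner_self_eq_norm_mul_norm, hx1] at hxy
    norm_num at hxy
  · intro j
    have hq : ∑ k, ∑ l, S j k l * ((B k l : ℝ) : ℂ) = 0 := by
      apply aux_E_zero (S j) (hS j) B hherm
      simpa [auxA] using hfrob j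
    have key : ∀ v : EuclideanSpace ℝ (Fin 3),
        ∑ k, ∑ l, (starRingEnd ℂ) ((v k : ℂ)) * S j k l * ((v l : ℂ))
          = ∑ k, ∑ l, S j k l * (((v k * v l : ℝ)) : ℂ) := by
      intro v
      refine Finset.sum_congr rfl fun k _ => Finset.sum_congr rfl fun l _ => ?_
      rw [Complex.conj_ofReal]
      push_cast
      ring
    rw [key x, key y]
    have hl : (lam : ℂ) ≠ 0 := Complex.ofReal_ne_zero.mpr hlam
    have hsub : ∑ k, ∑ l, S j k l * (((x k * x l : ℝ)) : ℂ)
        - ∑ k, ∑ l, S j k l * (((y k * y l : ℝ)) : ℂ)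
        = ((lam : ℂ))⁻¹ * ∑ k, ∑ l, S j k l * ((B k l : ℝ) : ℂ) := by
      rw [Finset.mul_sum, ← Finset.sum_sub_distrib]
      refine Finset.sum_congr rfl fun k _ => ?_
      rw [Finset.mul_sum, ← Finset.sum_sub_distrib]
      refine Finset.sum_congr rfl fun l _ => ?_
      rw [hdec k l]
      push_cast
      field_simp
    rw [hq, mul_zero] at hsub
    exact sub_eq_zero.mp hsub


/-- Part of Cor. 14 of the paper: no collection of `3` selfadjoint operators is informationally
complete w.r.t. the pure states on `ℂ³` with real amplitudes. Concretely, for any triple of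
selfadjoint matrices `S₁, S₂, S₃` there are real unit vectors `x ≠ ±y` whose quadratic forms
`⟨x, S_j x⟩` (viewing `x, y` as complex vectors with real entries) coincide; equivalently the
triple is not informationally complete w.r.t. the rank-one projections onto real unit
vectors. -/
theorem real_pure_states_not_ic_with_three (S : Fin 3 → Matrix (Fin 3) (Fin 3) ℂ)
    (hS : ∀ j, (S j).IsHermitian) :
    (∃ x y : EuclideanSpace ℝ (Fin 3), ‖x‖ = 1 ∧ ‖y‖ = 1 ∧ y ≠ x ∧ y ≠ -x ∧
      ∀ j, ∑ k, ∑ l, (starRingEnd ℂ) ((x k : ℂ)) * S j k l * ((x l : ℂ)) =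
           ∑ k, ∑ l, (starRingEnd ℂ) ((y k : ℂ)) * S j k l * ((y l : ℂ))) ∧
    ¬ IsIC S {ρ : Matrix (Fin 3) (Fin 3) ℂ |
        ∃ v : EuclideanSpace ℝ (Fin 3), ‖v‖ = 1 ∧
          ρ = Matrix.of (fun k l => ((v k : ℂ)) * ((v l : ℂ)))} := by
  obtain ⟨x, y, hx1, hy1, hyx, hynx, hq⟩ := aux_main S hS
  refine ⟨⟨x, y, hx1, hy1, hyx, hynx, hq⟩, ?_⟩
  intro hIC
  have hmx : Matrix.of (fun k l => ((x k : ℂ)) * ((x l : ℂ))) ∈ {ρ : Matrix (Fin 3) (Fin 3) ℂ |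
      ∃ v : EuclideanSpace ℝ (Fin 3), ‖v‖ = 1 ∧
        ρ = Matrix.of (fun k l => ((v k : ℂ)) * ((v l : ℂ)))} := ⟨x, hx1, rfl⟩
  have hmy : Matrix.of (fun k l => ((y k : ℂ)) * ((y l : ℂ))) ∈ {ρ : Matrix (Fin 3) (Fin 3) ℂ |
      ∃ v : EuclideanSpace ℝ (Fin 3), ‖v‖ = 1 ∧
        ρ = Matrix.of (fun k l => ((v k : ℂ)) * ((v l : ℂ)))} := ⟨y, hy1, rfl⟩
  have key2 : ∀ (v : EuclideanSpace ℝ (Fin 3)) (j : Fin 3),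
      (Matrix.of (fun k l => ((v k : ℂ)) * ((v l : ℂ))) * S j).trace
        = ∑ k, ∑ l, (starRingEnd ℂ) ((v k : ℂ)) * S j k l * ((v l : ℂ)) := by
    intro v j
    rw [Matrix.trace]
    simp only [Matrix.diag_apply, Matrix.mul_apply, Matrix.of_apply]
    rw [Finset.sum_comm]
    refine Finset.sum_congr rfl fun k _ => Finset.sum_congr rfl fun l _ => ?_
    rw [Complex.conj_ofReal]
    ring
  have heq := hIC _ hmx _ hmy (fun j => by rw [key2 x j, key2 y j]; exact hq j)
  have hent : ∀ k l, x k * x l = y k * y l := by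
    intro k l
    have h' : (Matrix.of (fun k l => ((x k : ℂ)) * ((x l : ℂ)))) k l
        = (Matrix.of (fun k l => ((y k : ℂ)) * ((y l : ℂ)))) k l := by rw [heq]
    simp only [Matrix.of_apply] at h'
    exact_mod_cast h'
  obtain ⟨k0, hk0⟩ : ∃ k, x k ≠ 0 := by
    by_contra h
    push_neg at h
    have hx0 : x = 0 := by
      ext k
      exact h k
    rw [hx0] at hx1
    simp at hx1
  have hy0 : y k0 ≠ 0 := by
    intro h
    have h1 := hent k0 k0
    rw [h] at h1
    simp at h1
    exact hk0 h1
  have hc2 : (x k0 / y k0) * (x k0 / y k0) = 1 := by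
    field_simp
    rw [sq, sq]; exact hent k0 k0
  have hcl : ∀ l, y l = (x k0 / y k0) * x l := by
    intro l
    have h1 := hent k0 l
    rw [div_mul_eq_mul_div, h1, mul_comm (y k0) (y l), mul_div_assoc, div_self hy0, mul_one]
  rcases mul_self_eq_one_iff.mp hc2 with hc | hc
  · apply hyx
    ext l
    rw [hcl l, hc, one_mul]
  · apply hynx
    ext l
    rw [hcl l, hc]
    show -1 * x l = (-x) l
    simp
end

section
/- For every d ≥ 1: (a) there exists a POVM on ℂ^d with d² outcomes that is informationally complete with respect to the set of all states on ℂ^d; and (b) every POVM on ℂ^d that is informationally complete with respect to the set of all states has at least d² outcomes. -/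
open Matrix
open scoped ComplexOrder

namespace ICAux
variable {d : ℕ}

noncomputable def coef (k l : Fin d) : ℂ :=
  if k = l then 0 else if k < l then 1 else Complex.I

noncomputable def ket (k l : Fin d) : Fin d → ℂ :=
  fun j => (if j = k then 1 else 0) + (if j = l then coef k l else 0)

noncomputable def Bm (p : Fin d × Fin d) : Matrix (Fin d) (Fin d) ℂ :=
  Matrix.of fun i j => ket p.1 p.2 i * star (ket p.1 p.2 j)

lemma sum_ket (F : Fin d → ℂ) (k l : Fin d) (c : ℂ) :
    ∑ j, ((if j = k then 1 else 0) + if j = l then c else 0) * F j = F k + c * F l := by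
  simp [add_mul, ite_mul, Finset.sum_add_distrib, Finset.sum_ite_eq']

lemma star_ket (k l : Fin d) (i : Fin d) :
    star (ket k l i) = (if i = k then 1 else 0) + (if i = l then star (coef k l) else 0) := by
  simp [ket, apply_ite (starRingEnd ℂ)]

lemma Bm_posSemidef (p : Fin d × Fin d) : (Bm p).PosSemidef := by
  have : Bm p = (Matrix.of fun (_ : Fin 1) j => star (ket p.1 p.2 j))ᴴ *
      (Matrix.of fun (_ : Fin 1) j => star (ket p.1 p.2 j)) := by
    ext i j
    simp [Bm, Matrix.mul_apply, Matrix.conjTranspose_apply]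
  rw [this]
  exact Matrix.posSemidef_conjTranspose_mul_self _

lemma trace_mul_Bm (Δ : Matrix (Fin d) (Fin d) ℂ) (k l : Fin d) :
    (Δ * Bm (k, l)).trace =
      (Δ k k + coef k l * Δ k l) + star (coef k l) * (Δ l k + coef k l * Δ l l) := by
  have h1 : ∀ i, ∑ j, Δ i j * ket k l j = Δ i k + coef k l * Δ i l := by
    intro i
    have := sum_ket (Δ i) k l (coef k l)
    simpa [ket, mul_comm, mul_left_comm] using by
      simpa only [mul_comm] using this
  calc (Δ * Bm (k, l)).trace
      = ∑ i, star (ket k l i) * (∑ j, Δ i j * ket k l j) := by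
        simp only [Matrix.trace, Matrix.mul_apply, Bm, Matrix.diag, Matrix.of_apply]
        refine Finset.sum_congr rfl fun i _ => ?_
        rw [Finset.mul_sum]
        exact Finset.sum_congr rfl fun j _ => by ring
    _ = ∑ i, ((if i = k then 1 else 0) + if i = l then star (coef k l) else 0) *
          (fun i => Δ i k + coef k l * Δ i l) i := by
        refine Finset.sum_congr rfl fun i _ => ?_
        rw [h1 i, star_ket]
    _ = _ := sum_ket (fun i => Δ i k + coef k l * Δ i l) k l (star (coef k l))

lemma quadform_Bm (p : Fin d × Fin d) (x : Fin d → ℂ) :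
    star x ⬝ᵥ (Bm p) *ᵥ x =
      star (x p.1 + star (coef p.1 p.2) * x p.2) * (x p.1 + star (coef p.1 p.2) * x p.2) := by
  obtain ⟨k, l⟩ := p
  have hz : ∑ j, star (ket k l j) * x j = x k + star (coef k l) * x l := by
    calc ∑ j, star (ket k l j) * x j
        = ∑ j, ((if j = k then 1 else 0) + if j = l then star (coef k l) else 0) * x j := by
          refine Finset.sum_congr rfl fun j _ => by rw [star_ket]
      _ = _ := sum_ket x k l _
  calc star x ⬝ᵥ (Bm (k, l)) *ᵥ x
      = (∑ i, star (x i) * ket k l i) * (∑ j, star (ket k l j) * x j) := by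
        rw [Finset.sum_mul_sum]
        simp only [dotProduct, Matrix.mulVec, Pi.star_apply, Bm, Matrix.of_apply]
        refine Finset.sum_congr rfl fun i _ => ?_
        rw [Finset.mul_sum]
        refine Finset.sum_congr rfl fun j _ => by ring
    _ = _ := by
        rw [hz]
        congr 1
        rw [← hz]
        rw [← starRingEnd_apply, map_sum]
        refine Finset.sum_congr rfl fun j _ => ?_
        simp [mul_comm]


lemma coef_abs_le (k l : Fin d) : ‖coef k l‖ ≤ 1 := by
  unfold coef
  split_ifs <;> simp

lemma posSemidef_real_smul {M : Matrix (Fin d) (Fin d) ℂ} (h : M.PosSemidef) {c : ℝ}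
    (hc : 0 ≤ c) : ((c : ℂ) • M).PosSemidef := by
  rw [Matrix.posSemidef_iff_dotProduct_mulVec]
  constructor
  · show _ᴴ = _
    rw [Matrix.conjTranspose_smul, h.1.eq]
    congr 1
    simp [Complex.star_def, Complex.conj_ofReal]
  · intro x
    rw [Matrix.smul_mulVec, dotProduct_smul, smul_eq_mul]
    exact mul_nonneg (by exact_mod_cast Complex.zero_le_real.2 hc) (h.dotProduct_mulVec_nonneg x)

/-- The quadratic form of `Bm p` is `normSq` of an explicit linear expression. -/
lemma quadform_Bm_normSq (p : Fin d × Fin d) (x : Fin d → ℂ) :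
    star x ⬝ᵥ (Bm p) *ᵥ x =
      (Complex.normSq (x p.1 + star (coef p.1 p.2) * x p.2) : ℂ) := by
  rw [quadform_Bm]
  rw [Complex.star_def, mul_comm, Complex.mul_conj]

lemma normSq_z_le (p : Fin d × Fin d) (x : Fin d → ℂ) :
    Complex.normSq (x p.1 + star (coef p.1 p.2) * x p.2) ≤ 2 * ∑ i, Complex.normSq (x i) := by
  obtain ⟨k, l⟩ := p
  have hnonneg : ∀ i ∈ Finset.univ, 0 ≤ Complex.normSq (x i) := fun i _ => Complex.normSq_nonneg _
  have habs : ‖x k + star (coef k l) * x l‖ ≤ ‖x k‖ + ‖x l‖ := by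
    refine (norm_add_le _ _).trans ?_
    gcongr
    rw [norm_mul]
    calc ‖star (coef k l)‖ * ‖x l‖
        ≤ 1 * ‖x l‖ := by
          gcongr
          rw [Complex.star_def, Complex.norm_conj]
          exact coef_abs_le k l
      _ = ‖x l‖ := one_mul _
  dsimp only
  by_cases hkl : k = l
  · subst hkl
    have hc0 : coef k k = (0 : ℂ) := if_pos rfl
    rw [hc0]
    simp only [star_zero, zero_mul, add_zero]
    have h1 : Complex.normSq (x k) ≤ ∑ i, Complex.normSq (x i) :=
      Finset.single_le_sum hnonneg (Finset.mem_univ k)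
    have h0 : (0:ℝ) ≤ ∑ i, Complex.normSq (x i) := Finset.sum_nonneg hnonneg
    linarith
  · have h2 : Complex.normSq (x k) + Complex.normSq (x l) ≤ ∑ i, Complex.normSq (x i) := by
      have := Finset.sum_le_sum_of_subset_of_nonneg
        (Finset.subset_univ ({k, l} : Finset (Fin d))) (fun i _ _ => Complex.normSq_nonneg (x i))
      rwa [Finset.sum_pair hkl] at this
    rw [Complex.normSq_eq_norm_sq]
    rw [Complex.normSq_eq_norm_sq, Complex.normSq_eq_norm_sq] at h2
    nlinarith [habs, h2, norm_nonneg (x k), norm_nonneg (x l),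
      norm_nonneg (x k + star (coef k l) * x l), sq_nonneg (‖x k‖ - ‖x l‖)]

/-- The total sum of the `Bm`. -/
noncomputable def Sm (d : ℕ) : Matrix (Fin d) (Fin d) ℂ := ∑ p : Fin d × Fin d, Bm p

lemma Sm_posSemidef : (Sm d).PosSemidef :=
  Finset.sum_induction _ _ (fun _ _ => Matrix.PosSemidef.add) Matrix.PosSemidef.zero
    (fun p _ => Bm_posSemidef p)

lemma quadform_Sm (x : Fin d → ℂ) :
    star x ⬝ᵥ (Sm d) *ᵥ x =
      ((∑ p : Fin d × Fin d, Complex.normSq (x p.1 + star (coef p.1 p.2) * x p.2) : ℝ) : ℂ) := by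
  have hsum : star x ⬝ᵥ (Sm d) *ᵥ x = ∑ p : Fin d × Fin d, star x ⬝ᵥ (Bm p) *ᵥ x := by
    let f : Matrix (Fin d) (Fin d) ℂ →+ ℂ :=
      { toFun := fun M => star x ⬝ᵥ M *ᵥ x
        map_zero' := by simp
        map_add' := fun M N => by rw [Matrix.add_mulVec, dotProduct_add] }
    exact map_sum f Bm Finset.univ
  rw [hsum]
  push_cast
  exact Finset.sum_congr rfl fun p _ => quadform_Bm_normSq p x

lemma quadform_sum_le (x : Fin d → ℂ) :
    (∑ p : Fin d × Fin d, Complex.normSq (x p.1 + star (coef p.1 p.2) * x p.2) : ℝ)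
      ≤ 2 * d ^ 2 * ∑ i, Complex.normSq (x i) := by
  calc (∑ p : Fin d × Fin d, Complex.normSq (x p.1 + star (coef p.1 p.2) * x p.2) : ℝ)
      ≤ ∑ _p : Fin d × Fin d, 2 * ∑ i, Complex.normSq (x i) :=
        Finset.sum_le_sum fun p _ => normSq_z_le p x
    _ = 2 * d ^ 2 * ∑ i, Complex.normSq (x i) := by
        rw [Finset.sum_const]
        simp [Finset.card_univ, sq]
        ring

/-- The normalizing constant. -/
noncomputable def cst (d : ℕ) : ℝ := (2 * d ^ 2)⁻¹

lemma cst_nonneg (d : ℕ) : 0 ≤ cst d := by unfold cst; positivity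

lemma cst_ne_zero {d : ℕ} (hd : 1 ≤ d) : ((cst d : ℝ) : ℂ) ≠ 0 := by
  have : (0:ℝ) < cst d := by
    unfold cst
    have : (0:ℝ) < (d:ℝ) := by exact_mod_cast hd
    positivity
  exact_mod_cast ne_of_gt this

/-- `1 - (2d²)⁻¹ • Sm` is PSD. -/
lemma one_sub_smul_Sm_posSemidef (hd : 1 ≤ d) :
    ((1 : Matrix (Fin d) (Fin d) ℂ) - ((cst d : ℝ) : ℂ) • Sm d).PosSemidef := by
  have hd2 : (0:ℝ) < 2 * d ^ 2 := by positivity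
  rw [Matrix.posSemidef_iff_dotProduct_mulVec]
  constructor
  · show _ᴴ = _
    rw [Matrix.conjTranspose_sub, Matrix.conjTranspose_one, Matrix.conjTranspose_smul,
      (Sm_posSemidef).1.eq]
    congr 1
    simp [Complex.star_def, Complex.conj_ofReal]
  · intro x
    rw [Matrix.sub_mulVec, dotProduct_sub, Matrix.smul_mulVec,
      dotProduct_smul, Matrix.one_mulVec, quadform_Sm]
    have hxx : star x ⬝ᵥ x = ((∑ i, Complex.normSq (x i) : ℝ) : ℂ) := by
      push_cast
      simp only [dotProduct, Pi.star_apply]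
      refine Finset.sum_congr rfl fun i _ => ?_
      rw [Complex.star_def, mul_comm, Complex.mul_conj]
    rw [hxx, smul_eq_mul]
    have : ((∑ i, Complex.normSq (x i) : ℝ) : ℂ) -
        (((cst d : ℝ) : ℂ)) * ((∑ p : Fin d × Fin d, Complex.normSq (x p.1 + star (coef p.1 p.2) * x p.2) : ℝ) : ℂ)
        = (((∑ i, Complex.normSq (x i) : ℝ) - cst d * (∑ p : Fin d × Fin d, Complex.normSq (x p.1 + star (coef p.1 p.2) * x p.2) : ℝ) : ℝ) : ℂ) := by
      push_cast
      ring
    rw [this, Complex.zero_le_real]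
    have hb := quadform_sum_le x
    rw [sub_nonneg]
    calc cst d * (∑ p : Fin d × Fin d, Complex.normSq (x p.1 + star (coef p.1 p.2) * x p.2) : ℝ)
        ≤ cst d * (2 * d ^ 2 * ∑ i, Complex.normSq (x i)) :=
          mul_le_mul_of_nonneg_left hb (cst_nonneg d)
      _ = ∑ i, Complex.normSq (x i) := by
          unfold cst
          field_simp


lemma coef_diag (k : Fin d) : coef k k = 0 := if_pos rfl

lemma coef_lt {k l : Fin d} (h : k < l) : coef k l = 1 := by
  unfold coef
  rw [if_neg (Fin.ne_of_lt h), if_pos h]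

lemma coef_gt {k l : Fin d} (h : l < k) : coef k l = Complex.I := by
  unfold coef
  rw [if_neg (Fin.ne_of_gt h), if_neg (not_lt_of_gt h)]

/-- The key separation lemma: if a traceless matrix has vanishing pairing with all
`Bm p`, `p ≠ 0`, then it vanishes. -/
lemma delta_eq_zero [NeZero d] (Δ : Matrix (Fin d) (Fin d) ℂ) (htr : Δ.trace = 0)
    (h : ∀ p : Fin d × Fin d, p ≠ 0 → (Δ * Bm p).trace = 0) : Δ = 0 := by
  have hdiag : ∀ k : Fin d, Δ k k = 0 := by
    have hne : ∀ k : Fin d, k ≠ 0 → Δ k k = 0 := by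
      intro k hk
      have := h (k, k) (fun hc => hk (congrArg Prod.fst hc))
      rwa [trace_mul_Bm, coef_diag, star_zero, zero_mul, zero_mul, add_zero, add_zero] at this
    intro k
    by_cases hk : k = 0
    · subst hk
      have : Δ.trace = Δ 0 0 := by
        unfold Matrix.trace Matrix.diag
        rw [Finset.sum_eq_single 0]
        · intro b _ hb; exact hne b hb
        · intro h0; exact absurd (Finset.mem_univ _) h0
      rw [this] at htr; exact htr
    · exact hne k hk
  have hoff : ∀ k l : Fin d, k < l → Δ k l = 0 ∧ Δ l k = 0 := by
    intro k l hkl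
    have hne1 : ((k, l) : Fin d × Fin d) ≠ 0 := fun hc =>
      Fin.ne_of_lt hkl ((congrArg Prod.fst hc).trans (congrArg Prod.snd hc).symm)
    have hne2 : ((l, k) : Fin d × Fin d) ≠ 0 := fun hc =>
      Fin.ne_of_lt hkl ((congrArg Prod.snd hc).trans (congrArg Prod.fst hc).symm)
    have e1 := h (k, l) hne1
    rw [trace_mul_Bm, coef_lt hkl, hdiag k, hdiag l] at e1
    have e2 := h (l, k) hne2
    rw [trace_mul_Bm, coef_gt hkl, hdiag k, hdiag l] at e2
    simp only [star_one, one_mul, mul_zero, add_zero, zero_add] at e1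
    -- e1 : Δ k l + Δ l k = 0
    simp only [Complex.star_def, Complex.conj_I, mul_zero, add_zero, zero_add, neg_mul] at e2
    -- e2 : I * Δ l k - I * Δ k l = 0 (in some form)
    have hIk : Δ l k = Δ k l := by
      refine mul_left_cancel₀ Complex.I_ne_zero
        (show Complex.I * Δ l k = Complex.I * Δ k l from ?_)
      linear_combination e2
    constructor
    · have : Δ k l + Δ k l = 0 := by rw [← hIk] at e1 ⊢; linear_combination e1
      exact add_self_eq_zero.mp this
    · rw [hIk]
      have : Δ k l + Δ k l = 0 := by rw [← hIk] at e1 ⊢; linear_combination e1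
      exact add_self_eq_zero.mp this
  ext i j
  rcases lt_trichotomy i j with hij | hij | hij
  · simpa using (hoff i j hij).1
  · subst hij; simpa using hdiag i
  · simpa using (hoff j i hij).2

/-- The POVM elements, indexed by pairs. -/
noncomputable def Apovm (d : ℕ) [NeZero d] (p : Fin d × Fin d) : Matrix (Fin d) (Fin d) ℂ :=
  ((cst d : ℝ) : ℂ) • Bm p +
    if p = 0 then (1 : Matrix (Fin d) (Fin d) ℂ) - ((cst d : ℝ) : ℂ) • Sm d else 0

lemma Apovm_posSemidef [NeZero d] (hd : 1 ≤ d) (p : Fin d × Fin d) :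
    (Apovm d p).PosSemidef := by
  refine Matrix.PosSemidef.add (posSemidef_real_smul (Bm_posSemidef p) (cst_nonneg d)) ?_
  split_ifs
  · exact one_sub_smul_Sm_posSemidef hd
  · exact Matrix.PosSemidef.zero

lemma Apovm_sum [NeZero d] : ∑ p : Fin d × Fin d, Apovm d p = 1 := by
  unfold Apovm
  rw [Finset.sum_add_distrib, ← Finset.smul_sum]
  rw [Finset.sum_ite_eq' Finset.univ (0 : Fin d × Fin d)
    (fun _ => (1 : Matrix (Fin d) (Fin d) ℂ) - ((cst d : ℝ) : ℂ) • Sm d)]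
  simp only [Finset.mem_univ, if_pos]
  show _ • Sm d + (1 - _ • Sm d) = 1
  abel


lemma herm_quad_real {H : Matrix (Fin d) (Fin d) ℂ} (hH : H.IsHermitian) (x : Fin d → ℂ) :
    star x ⬝ᵥ H *ᵥ x = (((star x ⬝ᵥ H *ᵥ x).re : ℝ) : ℂ) := by
  have h1 : star (star x ⬝ᵥ H *ᵥ x) = star x ⬝ᵥ H *ᵥ x := by
    conv_lhs => rw [Matrix.star_dotProduct, star_star, Matrix.star_mulVec, hH.eq,
      ← Matrix.dotProduct_mulVec]
  exact (Complex.conj_eq_iff_re.mp h1).symm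

lemma re_quad_bound (H : Matrix (Fin d) (Fin d) ℂ) (x : Fin d → ℂ) :
    |(star x ⬝ᵥ H *ᵥ x).re| ≤
      (∑ i, ∑ j, ‖H i j‖) * ∑ i, Complex.normSq (x i) := by
  set X := ∑ i, Complex.normSq (x i) with hXdef
  have hX : ∀ i, Complex.normSq (x i) ≤ X := fun i =>
    Finset.single_le_sum (fun _ _ => Complex.normSq_nonneg _) (Finset.mem_univ i)
  have hterm : ∀ i j : Fin d, ‖x i‖ * ‖x j‖ ≤ X := by
    intro i j
    have h1 := hX i
    have h2 := hX j
    rw [Complex.normSq_eq_norm_sq] at h1 h2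
    nlinarith [norm_nonneg (x i), norm_nonneg (x j)]
  calc |(star x ⬝ᵥ H *ᵥ x).re|
      ≤ ‖star x ⬝ᵥ H *ᵥ x‖ := Complex.abs_re_le_norm _
    _ ≤ ∑ i, ‖star (x i) * ((H *ᵥ x) i)‖ := norm_sum_le _ _
    _ ≤ ∑ i, ∑ j, ‖H i j‖ * (‖x i‖ * ‖x j‖) := by
        refine Finset.sum_le_sum fun i _ => ?_
        rw [norm_mul]
        calc ‖star (x i)‖ * ‖(H *ᵥ x) i‖
            ≤ ‖star (x i)‖ * ∑ j, ‖H i j * x j‖ := by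
              refine mul_le_mul_of_nonneg_left ?_ (norm_nonneg _)
              exact norm_sum_le (E := ℂ) _ _
          _ = ∑ j, ‖H i j‖ * (‖x i‖ * ‖x j‖) := by
              rw [Finset.mul_sum]
              refine Finset.sum_congr rfl fun j _ => ?_
              rw [norm_mul]
              rw [Complex.star_def, Complex.norm_conj]
              ring
    _ ≤ ∑ i, ∑ j, ‖H i j‖ * X := by
        refine Finset.sum_le_sum fun i _ => Finset.sum_le_sum fun j _ => ?_
        exact mul_le_mul_of_nonneg_left (hterm i j) (norm_nonneg _)
    _ = (∑ i, ∑ j, ‖H i j‖) * X := by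
        rw [Finset.sum_mul]
        exact Finset.sum_congr rfl fun i _ => (Finset.sum_mul _ _ _).symm

lemma herm_kernel_zero {n : ℕ} (hd : 1 ≤ d) (A : Fin n → Matrix (Fin d) (Fin d) ℂ)
    (hpsd : ∀ j, (A j).PosSemidef) (hsum : ∑ j, A j = 1)
    (hIC : ∀ ρ₁, (ρ₁.PosSemidef ∧ ρ₁.trace = 1) → ∀ ρ₂, (ρ₂.PosSemidef ∧ ρ₂.trace = 1) →
      (∀ j, (ρ₁ * A j).trace = (ρ₂ * A j).trace) → ρ₁ = ρ₂)
    {H : Matrix (Fin d) (Fin d) ℂ} (hH : H.IsHermitian) (h0 : ∀ j, (H * A j).trace = 0) :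
    H = 0 := by
  have hdR : (0:ℝ) < d := by exact_mod_cast hd
  have htr : H.trace = 0 := by
    calc H.trace = (H * ∑ j, A j).trace := by rw [hsum, mul_one]
      _ = (∑ j, H * A j).trace := by rw [Finset.mul_sum]
      _ = ∑ j, (H * A j).trace := by rw [Matrix.trace_sum]
      _ = 0 := by simp [h0]
  set C := ∑ i, ∑ j, ‖H i j‖ with hCdef
  have hC0 : (0:ℝ) ≤ C := Finset.sum_nonneg fun i _ =>
    Finset.sum_nonneg fun j _ => norm_nonneg _
  set ε : ℝ := ((d : ℝ) * (C + 1))⁻¹ with hεdef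
  have hε0 : (0:ℝ) < ε := by rw [hεdef]; positivity
  have hεC : ε * C ≤ (d:ℝ)⁻¹ := by
    calc ε * C ≤ ε * (C + 1) := by nlinarith
      _ = (d:ℝ)⁻¹ := by rw [hεdef]; field_simp
  set ρ₁ := (((d:ℝ)⁻¹ : ℝ) : ℂ) • (1 : Matrix (Fin d) (Fin d) ℂ) + ((ε : ℝ) : ℂ) • H with hρ₁
  set ρ₂ := (((d:ℝ)⁻¹ : ℝ) : ℂ) • (1 : Matrix (Fin d) (Fin d) ℂ) - ((ε : ℝ) : ℂ) • H with hρ₂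
  have hquad : ∀ x : Fin d → ℂ, star x ⬝ᵥ H *ᵥ x =
      (((star x ⬝ᵥ H *ᵥ x).re : ℝ) : ℂ) := herm_quad_real hH
  have hxx : ∀ x : Fin d → ℂ, star x ⬝ᵥ x = ((∑ i, Complex.normSq (x i) : ℝ) : ℂ) := by
    intro x
    push_cast
    simp only [dotProduct, Pi.star_apply]
    refine Finset.sum_congr rfl fun i _ => ?_
    rw [Complex.star_def, mul_comm, Complex.mul_conj]
  have hPSD : ∀ s : ℝ, s = 1 ∨ s = -1 →
      ((((d:ℝ)⁻¹ : ℝ) : ℂ) • (1 : Matrix (Fin d) (Fin d) ℂ) + ((s * ε : ℝ) : ℂ) • H).PosSemidef := by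
    intro s hs
    have hs1 : |s| = 1 := by rcases hs with h | h <;> simp [h]
    rw [Matrix.posSemidef_iff_dotProduct_mulVec]
    constructor
    · show _ᴴ = _
      rw [Matrix.conjTranspose_add, Matrix.conjTranspose_smul, Matrix.conjTranspose_smul,
        Matrix.conjTranspose_one, hH.eq]
      simp [Complex.star_def, Complex.conj_ofReal]
    · intro x
      rw [Matrix.add_mulVec, dotProduct_add, Matrix.smul_mulVec,
        Matrix.smul_mulVec, dotProduct_smul, dotProduct_smul,
        Matrix.one_mulVec, hxx x, hquad x, smul_eq_mul, smul_eq_mul]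
      set X := ∑ i, Complex.normSq (x i) with hXdef
      set r := (star x ⬝ᵥ H *ᵥ x).re with hrdef
      have hXnn : (0:ℝ) ≤ X := Finset.sum_nonneg fun i _ => Complex.normSq_nonneg _
      have hbound : |r| ≤ C * X := re_quad_bound H x
      have : (((d:ℝ)⁻¹ : ℝ) : ℂ) * ((X:ℝ):ℂ) + ((s * ε : ℝ):ℂ) * ((r:ℝ):ℂ)
          = ((((d:ℝ)⁻¹ * X + (s * ε) * r : ℝ)) : ℂ) := by push_cast; ring
      rw [this, Complex.zero_le_real]
      have h1 : (s * ε) * r ≥ -(ε * (C * X)) := by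
        have : |(s * ε) * r| ≤ ε * (C * X) := by
          rw [abs_mul, abs_mul, hs1, one_mul, abs_of_pos hε0]
          exact mul_le_mul_of_nonneg_left hbound (le_of_lt hε0)
        linarith [neg_abs_le ((s * ε) * r)]
      have h2 : ε * (C * X) ≤ (d:ℝ)⁻¹ * X := by
        rw [← mul_assoc]
        exact mul_le_mul_of_nonneg_right hεC hXnn
      linarith
  have htrρ : ∀ s : ℝ, ((((d:ℝ)⁻¹ : ℝ) : ℂ) • (1 : Matrix (Fin d) (Fin d) ℂ)
      + ((s * ε : ℝ) : ℂ) • H).trace = 1 := by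
    intro s
    rw [Matrix.trace_add, Matrix.trace_smul, Matrix.trace_smul, Matrix.trace_one, htr,
      smul_zero, add_zero, smul_eq_mul]
    push_cast
    field_simp
    simp
  have hρ₂' : ρ₂ = (((d:ℝ)⁻¹ : ℝ) : ℂ) • (1 : Matrix (Fin d) (Fin d) ℂ)
      + (((-1 : ℝ) * ε : ℝ) : ℂ) • H := by
    rw [hρ₂]
    push_cast
    module
  have hρ₁' : ρ₁ = (((d:ℝ)⁻¹ : ℝ) : ℂ) • (1 : Matrix (Fin d) (Fin d) ℂ)
      + (((1 : ℝ) * ε : ℝ) : ℂ) • H := by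
    rw [hρ₁]
    push_cast
    module
  have hst1 : ρ₁.PosSemidef ∧ ρ₁.trace = 1 := by
    rw [hρ₁']; exact ⟨hPSD 1 (Or.inl rfl), htrρ 1⟩
  have hst2 : ρ₂.PosSemidef ∧ ρ₂.trace = 1 := by
    rw [hρ₂']; exact ⟨hPSD (-1) (Or.inr rfl), htrρ (-1)⟩
  have heqtr : ∀ j, (ρ₁ * A j).trace = (ρ₂ * A j).trace := by
    intro j
    rw [hρ₁, hρ₂]
    simp only [Matrix.add_mul, Matrix.sub_mul, smul_mul_assoc, Matrix.trace_add,
      Matrix.trace_sub, Matrix.trace_smul, h0 j, smul_zero, add_zero, sub_zero]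
  have := hIC ρ₁ hst1 ρ₂ hst2 heqtr
  rw [hρ₁, hρ₂] at this
  have h3 : ((ε:ℝ):ℂ) • (H + H) =
      ((((d:ℝ)⁻¹ : ℝ) : ℂ) • (1 : Matrix (Fin d) (Fin d) ℂ) + ((ε:ℝ):ℂ) • H) -
        ((((d:ℝ)⁻¹ : ℝ) : ℂ) • (1 : Matrix (Fin d) (Fin d) ℂ) - ((ε:ℝ):ℂ) • H) := by
    rw [smul_add]; abel
  rw [this, sub_self] at h3
  have hεne : (((ε:ℝ):ℂ)) ≠ 0 := by exact_mod_cast ne_of_gt hε0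
  have h4 : H + H = 0 := by
    have h5 : (((ε:ℝ):ℂ))⁻¹ • (((ε:ℝ):ℂ) • (H + H)) =
        (((ε:ℝ):ℂ))⁻¹ • (0 : Matrix (Fin d) (Fin d) ℂ) := by rw [h3]
    rwa [inv_smul_smul₀ hεne, smul_zero] at h5
  ext i j
  have h5 : (H + H) i j = (0 : Matrix (Fin d) (Fin d) ℂ) i j := by rw [h4]
  rw [Matrix.add_apply, Matrix.zero_apply] at h5
  simpa using add_self_eq_zero.mp h5

end ICAux

/-- The classical fact recalled in Section 2 of the paper: on `ℂ^d` there is an informationally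
complete POVM (w.r.t. all states) with `d²` outcomes, and every informationally complete POVM
has at least `d²` outcomes. -/
theorem ic_all_states_minimal (d : ℕ) (hd : 1 ≤ d) :
    (∃ A : Fin (d ^ 2) → Matrix (Fin d) (Fin d) ℂ,
        IsPOVM A ∧ IsIC A {ρ : Matrix (Fin d) (Fin d) ℂ | IsState ρ}) ∧
    (∀ (n : ℕ) (A : Fin n → Matrix (Fin d) (Fin d) ℂ),
        IsPOVM A → IsIC A {ρ : Matrix (Fin d) (Fin d) ℂ | IsState ρ} → d ^ 2 ≤ n) := by
  haveI : NeZero d := ⟨Nat.one_le_iff_ne_zero.mp hd⟩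
  constructor
  · -- existence of an IC POVM with d² outcomes
    have hsq : d ^ 2 = d * d := by ring
    let e : Fin (d ^ 2) ≃ Fin d × Fin d := (finCongr hsq).trans finProdFinEquiv.symm
    refine ⟨fun j => ICAux.Apovm d (e j), ⟨fun j => ICAux.Apovm_posSemidef hd _, ?_⟩, ?_⟩
    · rw [← ICAux.Apovm_sum (d := d)]
      exact Equiv.sum_comp e (ICAux.Apovm d)
    · intro ρ₁ h₁ ρ₂ h₂ heq
      have h₁' : IsState ρ₁ := h₁
      have h₂' : IsState ρ₂ := h₂
      have htr : (ρ₁ - ρ₂).trace = 0 := by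
        rw [Matrix.trace_sub, h₁'.2, h₂'.2, sub_self]
      have hAj : ∀ j, ((ρ₁ - ρ₂) * ICAux.Apovm d (e j)).trace = 0 := by
        intro j
        rw [Matrix.sub_mul, Matrix.trace_sub, heq j, sub_self]
      have hB : ∀ p : Fin d × Fin d, p ≠ 0 → ((ρ₁ - ρ₂) * ICAux.Bm p).trace = 0 := by
        intro p hp
        have h := hAj (e.symm p)
        rw [Equiv.apply_symm_apply] at h
        unfold ICAux.Apovm at h
        rw [if_neg hp, add_zero, mul_smul_comm, Matrix.trace_smul, smul_eq_mul] at h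
        exact (mul_eq_zero.mp h).resolve_left (ICAux.cst_ne_zero hd)
      have := ICAux.delta_eq_zero (ρ₁ - ρ₂) htr hB
      exact sub_eq_zero.mp this
  · -- lower bound d² ≤ n
    intro n A hA hIC
    let L : Matrix (Fin d) (Fin d) ℂ →ₗ[ℂ] (Fin n → ℂ) :=
      { toFun := fun M => fun j => (M * A j).trace
        map_add' := fun M N => by
          funext j
          simp [Matrix.add_mul]
        map_smul' := fun c M => by
          funext j
          simp [smul_mul_assoc] }
    have hIC' : ∀ ρ₁, (ρ₁.PosSemidef ∧ ρ₁.trace = 1) → ∀ ρ₂,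
        (ρ₂.PosSemidef ∧ ρ₂.trace = 1) →
        (∀ j, (ρ₁ * A j).trace = (ρ₂ * A j).trace) → ρ₁ = ρ₂ :=
      fun ρ₁ h1 ρ₂ h2 h3 => hIC ρ₁ h1 ρ₂ h2 h3
    have hker : ∀ N : Matrix (Fin d) (Fin d) ℂ,
        (∀ j, (N * A j).trace = 0) → N.IsHermitian → N = 0 :=
      fun N hN hNh => ICAux.herm_kernel_zero hd A hA.1 hA.2 hIC' hNh hN
    have hinj : Function.Injective L := by
      rw [injective_iff_map_eq_zero]
      intro M hM
      have h0 : ∀ j, (M * A j).trace = 0 := fun j => congrFun hM j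
      have hherm : ∀ j, (A j)ᴴ = A j := fun j => (hA.1 j).1
      have hMH : ∀ j, (Mᴴ * A j).trace = 0 := by
        intro j
        have hmm : Mᴴ * A j = (A j * M)ᴴ := by
          rw [Matrix.conjTranspose_mul, hherm j]
        rw [hmm, Matrix.trace_conjTranspose, Matrix.trace_mul_comm, h0 j, star_zero]
      have hH : M + Mᴴ = 0 := by
        refine hker _ (fun j => ?_) ?_
        · rw [Matrix.add_mul, Matrix.trace_add, h0 j, hMH j, add_zero]
        · show _ᴴ = _
          rw [Matrix.conjTranspose_add, Matrix.conjTranspose_conjTranspose]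
          abel
      have hK : Complex.I • (M - Mᴴ) = 0 := by
        refine hker _ (fun j => ?_) ?_
        · rw [smul_mul_assoc, Matrix.trace_smul, Matrix.sub_mul, Matrix.trace_sub,
            h0 j, hMH j, sub_self, smul_zero]
        · show _ᴴ = _
          rw [Matrix.conjTranspose_smul, Matrix.conjTranspose_sub,
            Matrix.conjTranspose_conjTranspose]
          rw [Complex.star_def, Complex.conj_I, neg_smul, smul_sub, smul_sub]
          abel
      have h2 : M - Mᴴ = 0 := by
        have h5 : Complex.I⁻¹ • (Complex.I • (M - Mᴴ)) =
            Complex.I⁻¹ • (0 : Matrix (Fin d) (Fin d) ℂ) := by rw [hK]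
        rwa [inv_smul_smul₀ Complex.I_ne_zero, smul_zero] at h5
      have h3 : M = Mᴴ := sub_eq_zero.mp h2
      have h4 : M + M = 0 := by rw [← h3] at hH; exact hH
      ext i j
      have h5 : (M + M) i j = (0 : Matrix (Fin d) (Fin d) ℂ) i j := by rw [h4]
      rw [Matrix.add_apply, Matrix.zero_apply] at h5
      simpa using add_self_eq_zero.mp h5
    have hle := LinearMap.finrank_le_finrank_of_injective hinj
    have e1 : Module.finrank ℂ (Matrix (Fin d) (Fin d) ℂ) = d ^ 2 := by
      simp [Module.finrank_matrix]
      ring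
    have e2 : Module.finrank ℂ (Fin n → ℂ) = n := by simp
    rwa [e1, e2] at hle
end
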